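/- Let 0 < p < 1, σ > 0, μ > 0, and let B, Z₀, Z₁ be independent random variables on a probability space with P(B = 1) = p = 1 − P(B = 0), Z₀ ~ N(0, μ), Z₁ ~ N(0, σ² + μ). Put Q = Z₁ if B = 1 and Q = Z₀ if B = 0, and let τ = 2 · ((σ² + μ)/(σ²/μ)) · ln( (1 − p) · √(σ²/μ + 1) / p ). Assume τ ≥ 0. Then the threshold detector b̂(q) = 1 if q² > τ and b̂(q) = 0 otherwise satisfies P(b̂(Q) ≠ B) = (1 − p) · erfc(√(τ/(2μ))) + p · erf(√(τ/(2(σ² + μ)))). -/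

import Mathlib

open MeasureTheory ProbabilityTheory Real

/-- The Gauss error function `erf x = (2/√π) ∫₀ˣ e^{−t²} dt`. -/
noncomputable def erf (x : ℝ) : ℝ :=
  (2 / Real.sqrt Real.pi) * ∫ t in (0:ℝ)..x, Real.exp (-t ^ 2)

/-- The complementary error function `erfc = 1 − erf`. -/
noncomputable def erfc (x : ℝ) : ℝ := 1 - erf x

lemma erf_nonneg {x : ℝ} (hx : 0 ≤ x) : 0 ≤ erf x := by
  apply mul_nonneg
  · positivity
  · exact intervalIntegral.integral_nonneg hx (fun t _ => (Real.exp_pos _).le)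

lemma gauss_intInt (y : ℝ) (hy : 0 ≤ y) :
    ∫ t in (-y)..y, Real.exp (-t ^ 2) = 2 * ∫ t in (0:ℝ)..y, Real.exp (-t ^ 2) := by
  have hint : ∀ a b : ℝ, IntervalIntegrable (fun t => Real.exp (-t ^ 2)) volume a b :=
    fun a b => (Continuous.intervalIntegrable (by continuity) a b)
  have h1 : ∫ t in (-y)..(0:ℝ), Real.exp (-t ^ 2) = ∫ t in (0:ℝ)..y, Real.exp (-t ^ 2) := by
    have := intervalIntegral.integral_comp_neg (a := 0) (b := y) (fun t => Real.exp (-t ^ 2))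
    simp only [neg_neg, neg_zero] at this
    rw [← this]
    simp
  rw [← intervalIntegral.integral_add_adjacent_intervals (hint (-y) 0) (hint 0 y), h1]
  ring

lemma gaussian_sq_le (v : NNReal) (hv : v ≠ 0) {τ : ℝ} (hτ : 0 ≤ τ) :
    gaussianReal 0 v {x | x ^ 2 ≤ τ}
      = ENNReal.ofReal (erf (Real.sqrt (τ / (2 * v)))) := by
  have hset : {x : ℝ | x ^ 2 ≤ τ} = Set.Icc (-Real.sqrt τ) (Real.sqrt τ) := by
    ext x; simpa [Set.mem_Icc] using Real.sq_le hτ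
  have hv0 : (0:ℝ) < (v:ℝ) := by exact_mod_cast pos_iff_ne_zero.mpr hv
  set s : ℝ := Real.sqrt (2 * v) with hs
  have hspos : 0 < s := Real.sqrt_pos.mpr (by linarith)
  have hs2 : s ^ 2 = 2 * v := Real.sq_sqrt (by linarith)
  rw [hset, gaussianReal_apply_eq_integral _ hv]
  congr 1
  have ha : 0 ≤ Real.sqrt τ := Real.sqrt_nonneg τ
  rw [MeasureTheory.integral_Icc_eq_integral_Ioc,
    ← intervalIntegral.integral_of_le (by linarith)]
  have hpdf : ∀ x : ℝ, gaussianPDFReal 0 v x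
      = (Real.sqrt (2 * Real.pi * v))⁻¹ * Real.exp (-(x / s) ^ 2) := by
    intro x
    simp only [gaussianPDFReal, sub_zero]
    congr 1
    rw [div_pow, hs2]
    ring_nf
  simp_rw [hpdf]
  rw [intervalIntegral.integral_const_mul,
    intervalIntegral.integral_comp_div (fun t => Real.exp (-t ^ 2)) hspos.ne',
    neg_div, gauss_intInt _ (by positivity), smul_eq_mul]
  have hsqrt : Real.sqrt τ / s = Real.sqrt (τ / (2 * v)) := by
    rw [Real.sqrt_div hτ]
  rw [hsqrt, erf]
  have hsplit : Real.sqrt (2 * Real.pi * v) = Real.sqrt Real.pi * s := by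
    rw [hs, ← Real.sqrt_mul Real.pi_pos.le]
    ring_nf
  rw [hsplit]
  have hπ : 0 < Real.sqrt Real.pi := Real.sqrt_pos.mpr Real.pi_pos
  field_simp

lemma erf_le_one_of (v : NNReal) (hv : v ≠ 0) {τ : ℝ} (hτ : 0 ≤ τ) :
    erf (Real.sqrt (τ / (2 * v))) ≤ 1 := by
  have h := gaussian_sq_le v hv hτ
  have hle : gaussianReal 0 v {x | x ^ 2 ≤ τ} ≤ 1 := prob_le_one
  rw [h] at hle
  exact ENNReal.ofReal_le_one.mp hle

lemma gaussian_sq_gt (v : NNReal) (hv : v ≠ 0) {τ : ℝ} (hτ : 0 ≤ τ) :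
    gaussianReal 0 v {x | τ < x ^ 2}
      = ENNReal.ofReal (erfc (Real.sqrt (τ / (2 * v)))) := by
  have hms : MeasurableSet {x : ℝ | x ^ 2 ≤ τ} :=
    measurableSet_le (by measurability) measurable_const
  have hc : {x : ℝ | τ < x ^ 2} = {x : ℝ | x ^ 2 ≤ τ}ᶜ := by
    ext x; simp [not_le]
  rw [hc, prob_compl_eq_one_sub hms, gaussian_sq_le v hv hτ, erfc,
    ENNReal.ofReal_sub _ (erf_nonneg (Real.sqrt_nonneg _)), ENNReal.ofReal_one]


/-- **Corollary 2 (per-coordinate MMSuE).**  In the sparse Gaussian mixture model where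
`B ∼ Bernoulli(p)`, `Z₀ ∼ N(0, μ)`, `Z₁ ∼ N(0, σ² + μ)` are independent and `Q = Z₁` when
`B = 1`, `Q = Z₀` when `B = 0`, the threshold detector `b̂(q) = 1_{q² > τ}` has error
probability `(1 − p) erfc(√(τ/(2μ))) + p erf(√(τ/(2(σ² + μ))))`. -/
theorem mmsue_threshold_error_probability
    {Ω : Type*} [MeasurableSpace Ω] (P : Measure Ω) [IsProbabilityMeasure P]
    (p : ℝ) (hp : 0 < p) (hp1 : p < 1)
    (σ μ : NNReal) (hσ : 0 < σ) (hμ : 0 < μ)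
    (B Z₀ Z₁ : Ω → ℝ) (hB : Measurable B) (hZ₀ : Measurable Z₀) (hZ₁ : Measurable Z₁)
    (hindep : iIndepFun ![B, Z₀, Z₁] P)
    (hB1 : P {ω | B ω = 1} = ENNReal.ofReal p)
    (hB0 : P {ω | B ω = 0} = ENNReal.ofReal (1 - p))
    (hZ₀law : Measure.map Z₀ P = gaussianReal 0 μ)
    (hZ₁law : Measure.map Z₁ P = gaussianReal 0 (σ ^ 2 + μ))
    (Q : Ω → ℝ) (hQ : Q = fun ω => if B ω = 1 then Z₁ ω else Z₀ ω)
    (τ : ℝ)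
    (hτ : τ = 2 * (((σ:ℝ) ^ 2 + μ) / ((σ:ℝ) ^ 2 / μ))
        * Real.log ((1 - p) * Real.sqrt ((σ:ℝ) ^ 2 / μ + 1) / p))
    (hτ0 : 0 ≤ τ)
    (bhat : ℝ → ℝ) (hbhat : bhat = fun q => if τ < q ^ 2 then 1 else 0) :
    P {ω | bhat (Q ω) ≠ B ω}
      = ENNReal.ofReal ((1 - p) * erfc (Real.sqrt (τ / (2 * μ)))
          + p * erf (Real.sqrt (τ / (2 * ((σ:ℝ) ^ 2 + μ))))) := by
  have hμ0 : μ ≠ 0 := hμ.ne'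
  have hσμ0 : σ ^ 2 + μ ≠ 0 := by positivity
  -- sets
  set S1 : Set ℝ := {x | x ^ 2 ≤ τ} with hS1def
  set S0 : Set ℝ := {x | τ < x ^ 2} with hS0def
  have hS1m : MeasurableSet S1 := measurableSet_le (by measurability) measurable_const
  have hS0m : MeasurableSet S0 := measurableSet_lt measurable_const (by measurability)
  set A1 : Set Ω := B ⁻¹' {1} with hA1def
  set A0 : Set Ω := B ⁻¹' {0} with hA0def
  have hA1m : MeasurableSet A1 := hB (measurableSet_singleton _)
  have hA0m : MeasurableSet A0 := hB (measurableSet_singleton _)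
  have hA1eq : A1 = {ω | B ω = 1} := rfl
  have hA0eq : A0 = {ω | B ω = 0} := rfl
  set E : Set Ω := {ω | bhat (Q ω) ≠ B ω} with hEdef
  -- event decompositions
  have hE1 : E ∩ A1 = A1 ∩ (Z₁ ⁻¹' S1) := by
    ext ω
    simp only [hEdef, hA1def, hS1def, Set.mem_inter_iff, Set.mem_setOf_eq, Set.mem_preimage,
      Set.mem_singleton_iff, hQ, hbhat]
    constructor
    · rintro ⟨hne, hb⟩
      refine ⟨hb, ?_⟩
      rw [hb, if_pos rfl] at hne
      by_contra hlt
      rw [if_pos (not_le.mp hlt)] at hne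
      exact hne rfl
    · rintro ⟨hb, hz⟩
      refine ⟨?_, hb⟩
      rw [hb, if_pos rfl, if_neg (not_lt.mpr hz)]
      norm_num
  have hE0 : E ∩ A0 = A0 ∩ (Z₀ ⁻¹' S0) := by
    ext ω
    simp only [hEdef, hA0def, hS0def, Set.mem_inter_iff, Set.mem_setOf_eq, Set.mem_preimage,
      Set.mem_singleton_iff, hQ, hbhat]
    constructor
    · rintro ⟨hne, hb⟩
      refine ⟨hb, ?_⟩
      have hb1 : B ω ≠ 1 := by rw [hb]; norm_num
      rw [if_neg hb1, hb] at hne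
      by_contra hle
      rw [if_neg hle] at hne
      exact hne rfl
    · rintro ⟨hb, hz⟩
      refine ⟨?_, hb⟩
      have hb1 : B ω ≠ 1 := by rw [hb]; norm_num
      rw [if_neg hb1, hb, if_pos hz]
      norm_num
  -- B is a.s. in {0,1}
  have hdisj : Disjoint A1 A0 := by
    rw [hA1def, hA0def, Set.disjoint_iff]
    rintro ω ⟨h1, h0⟩
    simp only [Set.mem_preimage, Set.mem_singleton_iff] at h1 h0
    rw [h1] at h0; norm_num at h0
  have hU : P (A1 ∪ A0) = 1 := by
    rw [measure_union hdisj hA0m, hA1eq, hA0eq, hB1, hB0,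
      ← ENNReal.ofReal_add hp.le (by linarith)]
    norm_num
  have hUc : P ((A1 ∪ A0)ᶜ) = 0 := by
    rw [prob_compl_eq_one_sub (hA1m.union hA0m), hU, tsub_self]
  -- reduce to the two disjoint pieces
  have hsplit : P E = P (E ∩ A1) + P (E ∩ A0) := by
    have h1 : P E = P (E ∩ (A1 ∪ A0)) := by
      refine le_antisymm ?_ (measure_mono Set.inter_subset_left)
      calc P E ≤ P ((E ∩ (A1 ∪ A0)) ∪ (A1 ∪ A0)ᶜ) := by
            refine measure_mono fun ω hω => ?_
            by_cases hm : ω ∈ A1 ∪ A0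
            · exact Or.inl ⟨hω, hm⟩
            · exact Or.inr hm
        _ ≤ P (E ∩ (A1 ∪ A0)) + P ((A1 ∪ A0)ᶜ) := measure_union_le _ _
        _ = P (E ∩ (A1 ∪ A0)) := by rw [hUc, add_zero]
    rw [h1, Set.inter_union_distrib_left]
    refine measure_union ?_ ?_
    · exact (hdisj.mono Set.inter_subset_right Set.inter_subset_right)
    · rw [hE0]; exact hA0m.inter (hZ₀ hS0m)
  -- independence
  have hind1 : IndepFun B Z₁ P := by
    simpa using hindep.indepFun (show (0 : Fin 3) ≠ 2 by decide)
  have hind0 : IndepFun B Z₀ P := by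
    simpa using hindep.indepFun (show (0 : Fin 3) ≠ 1 by decide)
  have hP1 : P (E ∩ A1) = ENNReal.ofReal p * P (Z₁ ⁻¹' S1) := by
    rw [hE1, hind1.measure_inter_preimage_eq_mul _ _ (measurableSet_singleton _) hS1m,
      ← hA1def, hA1eq, hB1]
  have hP0 : P (E ∩ A0) = ENNReal.ofReal (1 - p) * P (Z₀ ⁻¹' S0) := by
    rw [hE0, hind0.measure_inter_preimage_eq_mul _ _ (measurableSet_singleton _) hS0m,
      ← hA0def, hA0eq, hB0]
  -- laws
  have hL1 : P (Z₁ ⁻¹' S1) = ENNReal.ofReal (erf (Real.sqrt (τ / (2 * ((σ:ℝ) ^ 2 + μ))))) := by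
    rw [← Measure.map_apply hZ₁ hS1m, hZ₁law, hS1def, gaussian_sq_le _ hσμ0 hτ0]
    norm_num
  have hL0 : P (Z₀ ⁻¹' S0) = ENNReal.ofReal (erfc (Real.sqrt (τ / (2 * μ)))) := by
    rw [← Measure.map_apply hZ₀ hS0m, hZ₀law, hS0def, gaussian_sq_gt _ hμ0 hτ0]
  -- combine
  have herfc0 : 0 ≤ erfc (Real.sqrt (τ / (2 * μ))) := by
    have := erf_le_one_of μ hμ0 hτ0
    rw [erfc]; linarith
  have herf1 : 0 ≤ erf (Real.sqrt (τ / (2 * ((σ:ℝ) ^ 2 + μ)))) :=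
    erf_nonneg (Real.sqrt_nonneg _)
  rw [hsplit, hP1, hP0, hL1, hL0,
    ← ENNReal.ofReal_mul hp.le, ← ENNReal.ofReal_mul (by linarith : (0:ℝ) ≤ 1 - p),
    ← ENNReal.ofReal_add (mul_nonneg hp.le herf1) (mul_nonneg (by linarith) herfc0)]
  congr 1
  ring
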